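/- Let H be Fréchet differentiable on ℝ^d, and let a sequence {(x_n, s_n)}, n ≥ 1, be generated by the penalty convex-concave procedure: for each n ≥ 0, t_n ≻_{K*} 0, v_n ∈ ∂h₀(x_n), and (x_{n+1}, s_{n+1}) is a globally optimal solution of the convex problem: minimize over (x, s) the function g₀(x) − ⟨v_n, x − x_n⟩ + ⟨t_n, s⟩ subject to G(x) − H(x_n) − DH(x_n)(x − x_n) ⪯_K s, s ⪰_K 0, x ∈ A. Then for every n ≥ 1, f₀(x_{n+1}) + ⟨t_n, s_{n+1}⟩ ≤ f₀(x_n) + ⟨t_n, s_n⟩, and this inequality is strict if x_n is not a generalized critical point for t_n. -/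
import Mathlib


open scoped RealInnerProductSpace Pointwise

/-- A function with values in a space ordered by a cone `K` is `K`-convex if
`Φ(αx₁ + (1−α)x₂) ⪯_K αΦ(x₁) + (1−α)Φ(x₂)` for all `x₁, x₂` and `α ∈ [0,1]`. -/
def KConvex {X Y : Type*} [AddCommGroup X] [Module ℝ X] [AddCommGroup Y] [Module ℝ Y]
    (K : Set Y) (Φ : X → Y) : Prop :=
  ∀ (x₁ x₂ : X) (α : ℝ), α ∈ Set.Icc (0 : ℝ) 1 →
    α • Φ x₁ + (1 - α) • Φ x₂ - Φ (α • x₁ + (1 - α) • x₂) ∈ K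

/-- The subdifferential of a convex function `φ : ℝ^d → ℝ` at a point `x`. -/
def subdiff {d : ℕ} (φ : EuclideanSpace ℝ (Fin d) → ℝ) (x : EuclideanSpace ℝ (Fin d)) :
    Set (EuclideanSpace ℝ (Fin d)) :=
  {w | ∀ y, φ x + ⟪w, y - x⟫ ≤ φ y}

/-- `x*` is a generalized critical point for `t`: there exist `v* ∈ ∂h₀(x*)` and `s* ⪰_K 0`
such that `(x*, s*)` is a globally optimal solution of the penalized linearized problem. -/
def GenCritical {d : ℕ} {Y : Type*}
    [NormedAddCommGroup Y] [NormedSpace ℝ Y]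
    (K : Set Y) (g₀ h₀ : EuclideanSpace ℝ (Fin d) → ℝ)
    (G H : EuclideanSpace ℝ (Fin d) → Y) (A : Set (EuclideanSpace ℝ (Fin d)))
    (DH : EuclideanSpace ℝ (Fin d) →L[ℝ] Y) (t : Y →L[ℝ] ℝ)
    (xs : EuclideanSpace ℝ (Fin d)) : Prop :=
  ∃ vs ∈ subdiff h₀ xs, ∃ ss ∈ K,
    (xs ∈ A ∧ ss - (G xs - H xs - DH (xs - xs)) ∈ K) ∧
    ∀ x s, x ∈ A → s ∈ K → s - (G x - H xs - DH (x - xs)) ∈ K →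
      g₀ xs - ⟪vs, xs - xs⟫ + t ss ≤ g₀ x - ⟪vs, x - xs⟫ + t s

open Filter Topology


lemma kadd {Y : Type*} [AddCommGroup Y] [Module ℝ Y] {K : Set Y}
    (hKconvex : Convex ℝ K) (hKcone : ∀ c : ℝ, 0 ≤ c → ∀ y ∈ K, c • y ∈ K)
    {a b : Y} (ha : a ∈ K) (hb : b ∈ K) : a + b ∈ K := by
  have h := hKconvex ha hb (by norm_num : (0:ℝ) ≤ 1/2) (by norm_num : (0:ℝ) ≤ 1/2)
    (by norm_num)
  have h2 := hKcone 2 (by norm_num) _ h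
  have : (2:ℝ) • ((1/2:ℝ) • a + (1/2:ℝ) • b) = a + b := by module
  rwa [this] at h2

lemma kgrad {d : ℕ} {Y : Type*} [NormedAddCommGroup Y] [NormedSpace ℝ Y]
    {K : Set Y} (hKclosed : IsClosed K)
    (hKcone : ∀ c : ℝ, 0 ≤ c → ∀ y ∈ K, c • y ∈ K)
    {H : EuclideanSpace ℝ (Fin d) → Y} (hH : KConvex K H)
    {p : EuclideanSpace ℝ (Fin d)} {DHp : EuclideanSpace ℝ (Fin d) →L[ℝ] Y}
    (hd : HasFDerivAt H DHp p) (y : EuclideanSpace ℝ (Fin d)) :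
    H y - H p - DHp (y - p) ∈ K := by
  set u := y - p with hu
  have hg : HasDerivAt (fun α : ℝ => H (p + α • u)) (DHp u) 0 := by
    have h1 : HasDerivAt (fun α : ℝ => p + α • u) u 0 := by
      simpa using ((hasDerivAt_id (0:ℝ)).smul_const u).const_add p
    have hd' : HasFDerivAt H DHp (p + (0:ℝ) • u) := by simpa using hd
    exact hd'.comp_hasDerivAt 0 h1
  have hslope := hasDerivAt_iff_tendsto_slope.mp hg
  have hmono : 𝓝[>] (0:ℝ) ≤ 𝓝[≠] (0:ℝ) :=
    nhdsWithin_mono 0 (fun z hz => ne_of_gt hz)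
  have hlim : Tendsto (fun α : ℝ => H y - H p - slope (fun β : ℝ => H (p + β • u)) 0 α)
      (𝓝[>] (0:ℝ)) (𝓝 (H y - H p - DHp u)) :=
    tendsto_const_nhds.sub (hslope.mono_left hmono)
  refine hKclosed.mem_of_tendsto hlim ?_
  have hIoc : Set.Ioc (0:ℝ) 1 ∈ 𝓝[>] (0:ℝ) :=
    Ioc_mem_nhdsGT_of_mem (by constructor <;> norm_num)
  filter_upwards [hIoc] with α hα
  have hm := hH y p α ⟨hα.1.le, hα.2⟩
  have hmem := hKcone α⁻¹ (inv_nonneg.mpr hα.1.le) _ hm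
  have hline : α • y + (1 - α) • p = p + α • u := by rw [hu]; module
  rw [hline] at hmem
  have hslope_eq : slope (fun β : ℝ => H (p + β • u)) 0 α
      = α⁻¹ • (H (p + α • u) - H (p + (0:ℝ) • u)) := by
    simp [slope_def_module]
  have hz : H (p + (0:ℝ) • u) = H p := by norm_num
  rw [hslope_eq, hz]
  have hne : α ≠ 0 := ne_of_gt hα.1
  have : H y - H p - α⁻¹ • (H (p + α • u) - H p)
      = α⁻¹ • (α • H y + (1 - α) • H p - H (p + α • u)) := by
    match_scalars <;> field_simp <;> ring
  rw [this]
  exact hmem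

theorem stmt_19 {d : ℕ} {Y : Type*}
    [NormedAddCommGroup Y] [NormedSpace ℝ Y] [CompleteSpace Y]
    (K : Set Y) (hKclosed : IsClosed K) (hKconvex : Convex ℝ K)
    (hKcone : ∀ c : ℝ, 0 ≤ c → ∀ y ∈ K, c • y ∈ K)
    (hKpointed : K ∩ (-K) = {0})
    (g₀ h₀ : EuclideanSpace ℝ (Fin d) → ℝ)
    (hg₀ : ConvexOn ℝ Set.univ g₀) (hh₀ : ConvexOn ℝ Set.univ h₀)
    (G H : EuclideanSpace ℝ (Fin d) → Y)
    (hG : KConvex K G) (hH : KConvex K H)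
    (A : Set (EuclideanSpace ℝ (Fin d))) (hAclosed : IsClosed A) (hAconvex : Convex ℝ A)
    -- H is Fréchet differentiable on ℝ^d with derivative DH
    (DH : EuclideanSpace ℝ (Fin d) → EuclideanSpace ℝ (Fin d) →L[ℝ] Y)
    (hHdiff : ∀ p, HasFDerivAt H (DH p) p)
    -- the sequence generated by the penalty convex-concave procedure
    (x : ℕ → EuclideanSpace ℝ (Fin d)) (s : ℕ → Y)
    (v : ℕ → EuclideanSpace ℝ (Fin d)) (t : ℕ → Y →L[ℝ] ℝ)
    (hx0 : x 0 ∈ A)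
    (ht : ∀ n, ∀ y ∈ K, 0 ≤ t n y) (htpos : ∀ n, ∀ y ∈ K, y ≠ 0 → 0 < t n y)
    (hv : ∀ n, v n ∈ subdiff h₀ (x n))
    (hsol : ∀ n,
      (x (n + 1) ∈ A ∧ s (n + 1) ∈ K ∧
        s (n + 1) - (G (x (n + 1)) - H (x n) - DH (x n) (x (n + 1) - x n)) ∈ K) ∧
      ∀ y σ, y ∈ A → σ ∈ K → σ - (G y - H (x n) - DH (x n) (y - x n)) ∈ K →
        g₀ (x (n + 1)) - ⟪v n, x (n + 1) - x n⟫ + t n (s (n + 1)) ≤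
          g₀ y - ⟪v n, y - x n⟫ + t n σ) :
    ∀ n : ℕ, 1 ≤ n →
      (g₀ (x (n + 1)) - h₀ (x (n + 1)) + t n (s (n + 1)) ≤
        g₀ (x n) - h₀ (x n) + t n (s n)) ∧
      (¬ GenCritical K g₀ h₀ G H A (DH (x n)) (t n) (x n) →
        g₀ (x (n + 1)) - h₀ (x (n + 1)) + t n (s (n + 1)) <
          g₀ (x n) - h₀ (x n) + t n (s n)) := by
  intro n hn
  obtain ⟨m, rfl⟩ : ∃ m, n = m + 1 := ⟨n - 1, (Nat.succ_pred_eq_of_pos hn).symm⟩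
  set n := m + 1 with hn_def
  obtain ⟨⟨hxA, hsK, hsfeas⟩, _⟩ := hsol m
  -- feasibility of (x n, s n) for the n-th subproblem
  have hgrad : H (x n) - H (x m) - DH (x m) (x n - x m) ∈ K :=
    kgrad hKclosed hKcone hH (hHdiff (x m)) (x n)
  have hfeas : s n - (G (x n) - H (x n) - DH (x n) (x n - x n)) ∈ K := by
    have hsum := kadd hKconvex hKcone hsfeas hgrad
    have heq : s n - (G (x n) - H (x m) - DH (x m) (x n - x m))
        + (H (x n) - H (x m) - DH (x m) (x n - x m))
        = s n - (G (x n) - H (x n) - DH (x n) (x n - x n)) := by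
      rw [sub_self, map_zero]; abel
    rwa [heq] at hsum
  obtain ⟨⟨hxA', hsK', hsfeas'⟩, hopt⟩ := hsol n
  have key := hopt (x n) (s n) hxA hsK hfeas
  have hzero : ⟪v n, x n - x n⟫ = (0:ℝ) := by rw [sub_self, inner_zero_right]
  rw [hzero] at key
  have hsub := hv n (x (n + 1))
  constructor
  · linarith
  · intro hncrit
    by_contra hle
    push_neg at hle
    apply hncrit
    refine ⟨v n, hv n, s n, hsK, ⟨hxA, hfeas⟩, ?_⟩
    intro y σ hyA hσK hσfeas
    have h2 := hopt y σ hyA hσK hσfeas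
    rw [hzero]
    linarith
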